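/- Let K := ℂ(t) be the field of rational functions over ℂ, equipped with the unique ℂ-derivation D satisfying D(t) = t³/(2(t⁴ − 1)) (equivalently, D(t² + t⁻²) = 1, so D is d/dz for z := t² + t⁻²). Let a and b be the ℂ-automorphisms of K with a(t) = −t and b(t) = 1/t, and set u := 1/(4(t² − t⁻²)) ∈ K. Then: (i) a(u) = u; (ii) b(u) − u = D(t⁻¹)/t⁻¹; and (iii) u = (1/2)·D(t)/t. -/

import Mathlib

instance : CharZero (RatFunc ℂ) :=
  charZero_of_injective_algebraMap (algebraMap ℂ (RatFunc ℂ)).injective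

private lemma xne : (RatFunc.X : RatFunc ℂ) ≠ 0 := RatFunc.X_ne_zero

private lemma x4ne : (RatFunc.X : RatFunc ℂ) ^ 4 - 1 ≠ 0 := by
  have h : (RatFunc.X : RatFunc ℂ) ^ 4 - 1
      = algebraMap (Polynomial ℂ) (RatFunc ℂ) (Polynomial.X ^ 4 - Polynomial.C 1) := by
    simp [map_sub, map_pow, RatFunc.algebraMap_X]
  rw [h]
  exact (map_ne_zero_iff _ (RatFunc.algebraMap_injective ℂ)).2
    (Polynomial.X_pow_sub_C_ne_zero (by norm_num) 1)

/-- computations of the paper's Example 4.3.  Let `K = ℂ(t)` with the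
unique `ℂ`-derivation `D` satisfying `D t = t³/(2(t⁴ − 1))` (so `D = d/dz` for
`z = t² + t⁻²`), let `a, b` be the `ℂ`-automorphisms with `a t = −t`, `b t = 1/t`,
and set `u := 1/(4(t² − t⁻²))`.  Then (i) `a u = u`; (ii) `b u − u = D(t⁻¹)/t⁻¹`;
(iii) `u = (1/2)·D t / t`. -/
theorem stmt12 (D : Derivation ℂ (RatFunc ℂ) (RatFunc ℂ))
    (hD : D RatFunc.X = RatFunc.X ^ 3 / (2 * (RatFunc.X ^ 4 - 1)))
    (a b : RatFunc ℂ ≃ₐ[ℂ] RatFunc ℂ)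
    (ha : a RatFunc.X = -RatFunc.X) (hb : b RatFunc.X = (RatFunc.X)⁻¹)
    (u : RatFunc ℂ)
    (hu : u = 1 / (4 * (RatFunc.X ^ 2 - (RatFunc.X)⁻¹ ^ 2))) :
    a u = u ∧
    b u - u = D ((RatFunc.X)⁻¹) / (RatFunc.X)⁻¹ ∧
    u = (1 / 2) * (D RatFunc.X / RatFunc.X) := by
  have hx := xne
  have hx4 := x4ne
  have hDinv : D (RatFunc.X : RatFunc ℂ)⁻¹ = -(RatFunc.X : RatFunc ℂ)⁻¹ ^ 2 * D RatFunc.X := by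
    rw [Derivation.leibniz_inv]; ring_nf
  have hu' : u = RatFunc.X ^ 2 / (4 * (RatFunc.X ^ 4 - 1)) := by
    have e : (4 : RatFunc ℂ) * (RatFunc.X ^ 2 - (RatFunc.X)⁻¹ ^ 2)
        = (4 * (RatFunc.X ^ 4 - 1)) / RatFunc.X ^ 2 := by
      rw [eq_div_iff (pow_ne_zero 2 hx)]
      have h1 : ((RatFunc.X : RatFunc ℂ))⁻¹ ^ 2 * RatFunc.X ^ 2 = 1 := by
        rw [← mul_pow, inv_mul_cancel₀ hx, one_pow]
      linear_combination (-4 : RatFunc ℂ) * h1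
    rw [hu, e, one_div_div]
  refine ⟨?_, ?_, ?_⟩
  · simp only [hu, map_div₀, map_one, map_mul, map_ofNat, map_sub, map_pow, map_inv₀, ha]
    ring_nf
  · have hbu : b u = -u := by
      simp only [hu, map_div₀, map_one, map_mul, map_ofNat, map_sub, map_pow, map_inv₀, hb,
        inv_inv]
      rw [show (4:RatFunc ℂ) * ((RatFunc.X)⁻¹ ^ 2 - RatFunc.X ^ 2)
          = -(4 * (RatFunc.X ^ 2 - (RatFunc.X)⁻¹ ^ 2)) by ring, one_div, one_div]
      exact _root_.inv_neg
    have h4 : (4 : RatFunc ℂ) * (RatFunc.X ^ 4 - 1) ≠ 0 :=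
      mul_ne_zero (by norm_num) hx4
    have h2 : (2 : RatFunc ℂ) * (RatFunc.X ^ 4 - 1) ≠ 0 :=
      mul_ne_zero (by norm_num) hx4
    rw [hbu, hu', hDinv, hD,
      show (4 : RatFunc ℂ) * (RatFunc.X ^ 4 - 1) = 2 * (2 * (RatFunc.X ^ 4 - 1)) by ring,
      ← div_div, div_inv_eq_mul]
    have hc : (RatFunc.X : RatFunc ℂ)⁻¹ ^ 2 * RatFunc.X ^ 4 = RatFunc.X ^ 2 := by
      rw [inv_pow, show (RatFunc.X : RatFunc ℂ) ^ 4 = RatFunc.X ^ 2 * RatFunc.X ^ 2 by ring,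
        ← mul_assoc, inv_mul_cancel₀ (pow_ne_zero 2 hx), one_mul]
    linear_combination ((2 * ((RatFunc.X : RatFunc ℂ) ^ 4 - 1))⁻¹) * hc
  · rw [hu', hD, div_div, div_mul_div_comm,
      div_eq_div_iff (mul_ne_zero (by norm_num) hx4)
        (mul_ne_zero (by norm_num) (mul_ne_zero (mul_ne_zero (by norm_num) hx4) hx))]
    ring
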